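/- arXiv:1205.3578 — 2 statements merged into one kernel-verified Lean document; each statement's English description precedes it below -/
import Mathlib

section
/- Let σ, σ₁ be real numbers with 1 < σ ≤ σ₁ and c₀, c₁ > 0, and let 𝖼 : [0,∞) → [0,∞) be continuous with c₀(1+θ)^(σ-1) ≤ 𝖼(θ) ≤ c₁(1+θ)^(σ₁-1) for all θ ≥ 0. Define h(θ) = ∫₀^θ 𝖼(s) ds. Then h is strictly increasing on [0,∞), and there exist constants d₀, d₁ > 0 such that for all w ≥ 0, d₁(w^{1/σ₁} − 1) ≤ h⁻¹(w) ≤ d₀(w^{1/σ} + 1). -/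
open MeasureTheory Set
open scoped NNReal

lemma real_rpow_add_le (a b p : ℝ) (ha : 0 ≤ a) (hb : 0 ≤ b) (hp : 0 ≤ p) (hp1 : p ≤ 1) :
    (a + b) ^ p ≤ a ^ p + b ^ p := by
  have key := NNReal.rpow_add_le_add_rpow a.toNNReal b.toNNReal hp hp1
  have h1 : ((a.toNNReal + b.toNNReal : ℝ≥0) : ℝ) = a + b := by
    simp [Real.coe_toNNReal a ha, Real.coe_toNNReal b hb]
  have h2 := NNReal.coe_le_coe.mpr key
  rw [NNReal.coe_add, NNReal.coe_rpow, NNReal.coe_rpow, NNReal.coe_rpow, h1,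
    Real.coe_toNNReal a ha, Real.coe_toNNReal b hb] at h2
  exact h2

lemma integral_one_add_rpow (r θ : ℝ) (hr : -1 < r) :
    ∫ s in (0:ℝ)..θ, (1+s)^r = ((1+θ)^(r+1) - 1)/(r+1) := by
  have h1 : ∫ s in (0:ℝ)..θ, (1+s)^r = ∫ x in (1:ℝ)..(1+θ), x^r := by
    have := intervalIntegral.integral_comp_add_left (a := 0) (b := θ) (fun x => x ^ r) 1
    simpa using this
  rw [h1, integral_rpow (Or.inl hr), Real.one_rpow]

set_option maxHeartbeats 1000000 in
/-- Growth estimate (2.34) for the inverse enthalpy map `Θ = h⁻¹` under Hypothesis (I). -/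
theorem enthalpy_inverse_growth
    (σ σ₁ c₀ c₁ : ℝ) (hσ : 1 < σ) (hσσ₁ : σ ≤ σ₁) (hc₀ : 0 < c₀) (hc₁ : 0 < c₁)
    (c : ℝ → ℝ) (hc_cont : ContinuousOn c (Ici 0))
    (hc_nonneg : ∀ θ ≥ (0:ℝ), 0 ≤ c θ)
    (hc_bound : ∀ θ ≥ (0:ℝ), c₀ * (1+θ) ^ (σ-1) ≤ c θ ∧ c θ ≤ c₁ * (1+θ) ^ (σ₁-1))
    (h : ℝ → ℝ) (hh : ∀ θ, h θ = ∫ s in (0:ℝ)..θ, c s) :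
    StrictMonoOn h (Ici 0) ∧
      ∃ d₀ > (0:ℝ), ∃ d₁ > (0:ℝ), ∀ w ≥ (0:ℝ), ∀ θ ≥ (0:ℝ), h θ = w →
        d₁ * (w ^ (1/σ₁) - 1) ≤ θ ∧ θ ≤ d₀ * (w ^ (1/σ) + 1) := by
  have hσ0 : (0:ℝ) < σ := by linarith
  have hσ₁0 : (0:ℝ) < σ₁ := by linarith
  -- integrability of c on [a,b] ⊆ [0,∞)
  have hint : ∀ a b : ℝ, 0 ≤ a → a ≤ b → IntervalIntegrable c volume a b := by
    intro a b ha hab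
    apply ContinuousOn.intervalIntegrable
    apply hc_cont.mono
    rw [uIcc_of_le hab]
    intro x hx
    exact le_trans ha hx.1
  -- continuity of the comparison functions
  have hcont_pow : ∀ r : ℝ, ContinuousOn (fun s : ℝ => (1+s)^r) (Ici 0) := by
    intro r
    apply ContinuousOn.rpow_const (by fun_prop)
    intro x hx
    left
    have : (0:ℝ) ≤ x := hx
    positivity
  have hint_pow : ∀ r a b : ℝ, 0 ≤ a → a ≤ b →
      IntervalIntegrable (fun s : ℝ => (1+s)^r) volume a b := by
    intro r a b ha hab
    apply ContinuousOn.intervalIntegrable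
    apply (hcont_pow r).mono
    rw [uIcc_of_le hab]
    intro x hx
    exact le_trans ha hx.1
  -- strict monotonicity
  have hmono : StrictMonoOn h (Ici 0) := by
    intro a ha b hb hab
    have h1 : h a + ∫ s in a..b, c s = h b := by
      rw [hh a, hh b]
      exact intervalIntegral.integral_add_adjacent_intervals (hint 0 a le_rfl ha)
        (hint a b ha hab.le)
    have h2 : 0 < ∫ s in a..b, c s := by
      apply intervalIntegral.intervalIntegral_pos_of_pos_on (hint a b ha hab.le) _ hab
      intro x hx
      have hx0 : (0:ℝ) ≤ x := le_trans ha hx.1.le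
      have := (hc_bound x hx0).1
      have hpos : 0 < c₀ * (1+x)^(σ-1) := by
        have : (0:ℝ) < 1 + x := by linarith
        positivity
      linarith
    linarith
  refine ⟨hmono, ?_⟩
  -- the two integral bounds for h
  have hlow : ∀ θ : ℝ, 0 ≤ θ → c₀/σ * ((1+θ)^σ - 1) ≤ h θ := by
    intro θ hθ
    have hb : ∫ s in (0:ℝ)..θ, c₀ * (1+s)^(σ-1) ≤ ∫ s in (0:ℝ)..θ, c s := by
      apply intervalIntegral.integral_mono_on hθ ((hint_pow (σ-1) 0 θ le_rfl hθ).const_mul c₀)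
        (hint 0 θ le_rfl hθ)
      intro x hx
      exact (hc_bound x hx.1).1
    rw [hh θ]
    calc c₀/σ * ((1+θ)^σ - 1) = c₀ * (((1+θ)^(σ-1+1) - 1)/(σ-1+1)) := by
          rw [sub_add_cancel]; ring
      _ = ∫ s in (0:ℝ)..θ, c₀ * (1+s)^(σ-1) := by
          rw [intervalIntegral.integral_const_mul, integral_one_add_rpow (σ-1) θ (by linarith)]
      _ ≤ _ := hb
  have hup : ∀ θ : ℝ, 0 ≤ θ → h θ ≤ c₁/σ₁ * ((1+θ)^σ₁ - 1) := by
    intro θ hθ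
    have hb : ∫ s in (0:ℝ)..θ, c s ≤ ∫ s in (0:ℝ)..θ, c₁ * (1+s)^(σ₁-1) := by
      apply intervalIntegral.integral_mono_on hθ (hint 0 θ le_rfl hθ)
        ((hint_pow (σ₁-1) 0 θ le_rfl hθ).const_mul c₁)
      intro x hx
      exact (hc_bound x hx.1).2
    rw [hh θ]
    calc ∫ s in (0:ℝ)..θ, c s ≤ ∫ s in (0:ℝ)..θ, c₁ * (1+s)^(σ₁-1) := hb
      _ = c₁ * (((1+θ)^(σ₁-1+1) - 1)/(σ₁-1+1)) := by
          rw [intervalIntegral.integral_const_mul, integral_one_add_rpow (σ₁-1) θ (by linarith)]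
      _ = c₁/σ₁ * ((1+θ)^σ₁ - 1) := by rw [sub_add_cancel]; ring
  -- constants
  set A : ℝ := σ₁ / c₁ with hA
  have hA0 : 0 < A := by positivity
  set p : ℝ := 1/σ₁ with hp
  have hp0 : 0 < p := by positivity
  have hp1 : p ≤ 1 := by
    rw [hp, div_le_one hσ₁0]; linarith
  have hδ0 : 0 < (1+A)^p - 1 := by
    have : (1:ℝ) < (1+A)^p := by
      have := Real.one_lt_rpow_iff_of_pos (x := 1+A) (by linarith) (y := p)
      rw [this]; exact Or.inl ⟨by linarith, hp0⟩
    linarith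
  set δ : ℝ := (1+A)^p - 1 with hδ
  have hAp0 : 0 < A^p := Real.rpow_pos_of_pos hA0 p
  set K : ℝ := 2 / A^p with hK
  have hK0 : 0 < K := by positivity
  refine ⟨(σ/c₀)^(1/σ), Real.rpow_pos_of_pos (by positivity) _,
    min (A^p/2) (δ/K), lt_min (by positivity) (by positivity), ?_⟩
  intro w hw θ hθ hw'
  set d₁ : ℝ := min (A^p/2) (δ/K) with hd₁
  have hd₁0 : 0 < d₁ := lt_min (by positivity) (by positivity)
  have h1θ : (0:ℝ) < 1 + θ := by linarith
  constructor
  · -- lower bound: θ ≥ (1+Aw)^p - 1 ≥ d₁ (w^p - 1)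
    have hwle : w ≤ c₁/σ₁ * ((1+θ)^σ₁ - 1) := hw' ▸ hup θ hθ
    have hstep : 1 + A*w ≤ (1+θ)^σ₁ := by
      have hc₁σ : 0 < c₁/σ₁ := by positivity
      rw [hA]
      have : σ₁/c₁ * w ≤ (1+θ)^σ₁ - 1 := by
        rw [div_mul_eq_mul_div, div_le_iff₀ hc₁]
        have := mul_le_mul_of_nonneg_left hwle hσ₁0.le
        calc σ₁ * w ≤ σ₁ * (c₁/σ₁ * ((1+θ)^σ₁ - 1)) := this
          _ = ((1+θ)^σ₁ - 1) * c₁ := by field_simp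
      linarith
    have hθge : (1 + A*w)^p - 1 ≤ θ := by
      have h1 : ((1 + A*w))^p ≤ ((1+θ)^σ₁)^p :=
        Real.rpow_le_rpow (by positivity) hstep hp0.le
      have h2 : ((1+θ)^σ₁)^p = 1 + θ := by
        rw [← Real.rpow_mul h1θ.le, hp, mul_one_div, div_self hσ₁0.ne', Real.rpow_one]
      rw [h2] at h1
      linarith
    have hkey : d₁ * (w^p - 1) ≤ (1 + A*w)^p - 1 := by
      rcases le_or_gt w 1 with hw1 | hw1
      · have : w^p ≤ 1 := Real.rpow_le_one hw hw1 hp0.le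
        have h2 : (1:ℝ) ≤ (1 + A*w)^p := by
          apply Real.one_le_rpow (by nlinarith) hp0.le
        nlinarith
      · have hwp1 : (1:ℝ) ≤ w^p := Real.one_le_rpow hw1.le hp0.le
        rcases le_or_gt (w^p) K with hwK | hwK
        · have hL : δ ≤ (1 + A*w)^p - 1 := by
            have : (1+A)^p ≤ (1+A*w)^p := by
              apply Real.rpow_le_rpow (by positivity) (by nlinarith) hp0.le
            rw [hδ]; linarith
          have : d₁ * (w^p - 1) ≤ (δ/K) * K := by
            apply mul_le_mul (min_le_right _ _) (by linarith) (by linarith) (by positivity)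
          rw [div_mul_cancel₀ _ hK0.ne'] at this
          linarith
        · have hL : A^p * w^p - 1 ≤ (1+A*w)^p - 1 := by
            have : (A*w)^p ≤ (1+A*w)^p := by
              apply Real.rpow_le_rpow (by positivity) (by linarith) hp0.le
            rw [Real.mul_rpow hA0.le (by linarith)] at this
            linarith
          have hd₁A : d₁ ≤ A^p/2 := min_le_left _ _
          rw [hK] at hwK
          have h2 : 2 ≤ A^p * w^p := by
            have h3 := (div_lt_iff₀ hAp0).mp hwK
            nlinarith
          have e1 : d₁ * (w^p - 1) ≤ (A^p/2) * (w^p - 1) :=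
            mul_le_mul_of_nonneg_right hd₁A (by linarith)
          have e2 : (A^p/2) * (w^p - 1) ≤ A^p * w^p - 1 := by nlinarith
          linarith
    calc d₁ * (w^(1/σ₁) - 1) = d₁ * (w^p - 1) := by rw [hp]
      _ ≤ (1 + A*w)^p - 1 := hkey
      _ ≤ θ := hθge
  · -- upper bound
    have hwge : c₀/σ * ((1+θ)^σ - 1) ≤ w := hw' ▸ hlow θ hθ
    have hstep : (1+θ)^σ ≤ 1 + σ/c₀ * w := by
      have : (1+θ)^σ - 1 ≤ σ/c₀ * w := by
        rw [div_mul_eq_mul_div, le_div_iff₀ hc₀]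
        have := mul_le_mul_of_nonneg_left hwge hσ0.le
        calc ((1+θ)^σ - 1) * c₀ = σ * (c₀/σ * ((1+θ)^σ - 1)) := by field_simp
          _ ≤ σ * w := this
      linarith
    have hq0 : 0 < 1/σ := by positivity
    have hq1 : 1/σ ≤ 1 := by rw [div_le_one hσ0]; linarith
    have h1 : 1 + θ ≤ (1 + σ/c₀ * w)^(1/σ) := by
      have h2 : ((1+θ)^σ)^(1/σ) ≤ (1 + σ/c₀ * w)^(1/σ) :=
        Real.rpow_le_rpow (by positivity) hstep hq0.le
      have h3 : ((1+θ)^σ)^(1/σ) = 1 + θ := by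
        rw [← Real.rpow_mul h1θ.le, mul_one_div, div_self hσ0.ne', Real.rpow_one]
      rwa [h3] at h2
    have h4 : (1 + σ/c₀ * w)^(1/σ) ≤ 1 + (σ/c₀ * w)^(1/σ) := by
      have := real_rpow_add_le 1 (σ/c₀ * w) (1/σ) zero_le_one (by positivity) hq0.le hq1
      rwa [Real.one_rpow] at this
    have h5 : (σ/c₀ * w)^(1/σ) = (σ/c₀)^(1/σ) * w^(1/σ) :=
      Real.mul_rpow (by positivity) hw
    have h6 : (0:ℝ) ≤ w^(1/σ) := Real.rpow_nonneg hw _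
    calc θ ≤ (σ/c₀)^(1/σ) * w^(1/σ) := by rw [← h5]; linarith
      _ ≤ (σ/c₀)^(1/σ) * (w^(1/σ) + 1) := by
        have h7 : 0 < (σ/c₀)^(1/σ) := Real.rpow_pos_of_pos (by positivity) _
        nlinarith
end

section
/- Let Ω ⊂ ℝ^d be a bounded measurable set, τ > 0, and let w_{k-1}, w_k, g ∈ L²(Ω) with w_{k-1} ≥ 0 a.e. and g ≥ 0 a.e. Suppose w_k ∈ H¹(Ω) satisfies the variational identity (1/τ)∫_Ω (w_k − w_{k-1}) v + ∫_Ω K̃ ∇w_k · ∇v + ∫_Ω Θ̃ v = ∫_Ω g v for all v ∈ H¹(Ω), where K̃ ∈ L^∞(Ω) with K̃ ≥ c₂ > 0 a.e. and Θ̃ ∈ L²(Ω) with Θ̃ · w_k⁻ = 0 a.e. (Θ̃ vanishes where w_k < 0). Then w_k ≥ 0 a.e. in Ω. -/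
open MeasureTheory

/-- Step 2 of Lemma 3.6 (positivity of the discrete enthalpy, formula (3.34)):
if the discrete enthalpy `w_k` solves the variational identity of the time-discrete heat
equation with nonnegative data, then `w_k ≥ 0` a.e. Here the Sobolev space `H¹(Ω)` is
modelled as a set `S` of pairs (function, gradient), closed under the truncation
`v ↦ −v⁻` with the correspondingly truncated gradient. -/
theorem discrete_enthalpy_positivity
    {Ω : Type*} [MeasurableSpace Ω] (μ : Measure Ω) [IsFiniteMeasure μ]
    (d : ℕ)
    (S : Set ((Ω → ℝ) × (Ω → EuclideanSpace ℝ (Fin d))))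
    (hS_trunc : ∀ p ∈ S,
      (⟨fun x => -(max (-(p.1 x)) 0),
        fun x => if p.1 x < 0 then p.2 x else 0⟩ :
          (Ω → ℝ) × (Ω → EuclideanSpace ℝ (Fin d))) ∈ S)
    (τ : ℝ) (hτ : 0 < τ) (c₂ C : ℝ) (hc₂ : 0 < c₂)
    (wprev wk g Θ' K' : Ω → ℝ) (gwk : Ω → EuclideanSpace ℝ (Fin d))
    (hwk_mem : (⟨wk, gwk⟩ : (Ω → ℝ) × (Ω → EuclideanSpace ℝ (Fin d))) ∈ S)
    (hwprev2 : MemLp wprev 2 μ) (hwk2 : MemLp wk 2 μ) (hg2 : MemLp g 2 μ)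
    (hΘ2 : MemLp Θ' 2 μ)
    (hK_bound : ∀ᵐ x ∂μ, c₂ ≤ K' x ∧ K' x ≤ C)
    (hwprev_nonneg : ∀ᵐ x ∂μ, 0 ≤ wprev x)
    (hg_nonneg : ∀ᵐ x ∂μ, 0 ≤ g x)
    (hΘ_vanish : ∀ᵐ x ∂μ, Θ' x * max (-(wk x)) 0 = 0)
    (hvar : ∀ p ∈ S,
      (1/τ) * ∫ x, (wk x - wprev x) * p.1 x ∂μ
        + ∫ x, K' x * (inner ℝ (gwk x) (p.2 x) : ℝ) ∂μ
        + ∫ x, Θ' x * p.1 x ∂μ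
      = ∫ x, g x * p.1 x ∂μ) :
    ∀ᵐ x ∂μ, 0 ≤ wk x := by

  classical
  set f : Ω → ℝ := fun x => max (-(wk x)) 0 with hfdef
  have hfmeas : AEStronglyMeasurable f μ :=
    (hwk2.aestronglyMeasurable.neg).sup aestronglyMeasurable_const
  have hf2 : MemLp f 2 μ := by
    refine MemLp.of_le hwk2 hfmeas (Filter.Eventually.of_forall fun x => ?_)
    simp only [hfdef, Real.norm_eq_abs]
    rcases le_total (wk x) 0 with h | h
    · rw [max_eq_left (by linarith)]
      rw [abs_of_nonneg (by linarith), abs_of_nonpos h]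
    · rw [max_eq_right (by linarith)]
      simpa using abs_nonneg (wk x)
  have hmul : ∀ {u v : Ω → ℝ}, MemLp u 2 μ → MemLp v 2 μ →
      Integrable (fun x => u x * v x) μ := by
    intro u v hu hv
    have hexp : (1:ENNReal)/1 = 1/2 + 1/2 := by
      rw [ENNReal.div_add_div_same]
      norm_num
      exact (ENNReal.div_self two_ne_zero ENNReal.ofNat_ne_top).symm
    have h1 : MemLp (u • v) 1 μ :=
      MemLp.smul (p := 2) (q := 2) (r := 1) hv hu
    have := memLp_one_iff_integrable.mp h1
    exact this
  have hspec := hvar _ (hS_trunc _ hwk_mem)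
  simp only at hspec
  -- the Θ' term is zero
  have hI3 : ∫ x, Θ' x * (-(max (-(wk x)) 0)) ∂μ = 0 := by
    refine integral_eq_zero_of_ae ?_
    filter_upwards [hΘ_vanish] with x hx
    simp only [Pi.zero_apply, mul_neg, hx, neg_zero]
  -- the gradient term is nonnegative
  have hI2 : 0 ≤ ∫ x, K' x * (inner ℝ (gwk x) (if wk x < 0 then gwk x else 0) : ℝ) ∂μ := by
    refine integral_nonneg_of_ae ?_
    filter_upwards [hK_bound] with x hx
    obtain ⟨hx1, -⟩ := hx
    by_cases h : wk x < 0
    · simp only [Pi.zero_apply, h, if_true]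
      have h2 : (0:ℝ) ≤ inner ℝ (gwk x) (gwk x) := real_inner_self_nonneg
      nlinarith
    · simp [Pi.zero_apply, h]
  -- the rhs is nonpositive
  have hRHS : ∫ x, g x * (-(max (-(wk x)) 0)) ∂μ ≤ 0 := by
    refine integral_nonpos_of_ae ?_
    filter_upwards [hg_nonneg] with x hx
    have h2 : 0 ≤ max (-(wk x)) 0 := le_max_right _ _
    simp only [Pi.zero_apply]
    nlinarith
  -- integrability facts
  have hint1 : Integrable (fun x => f x * f x) μ := hmul hf2 hf2
  have hint2 : Integrable (fun x => (wk x - wprev x) * (-(max (-(wk x)) 0))) μ := by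
    have := hmul (hwk2.sub hwprev2) hf2.neg
    simpa [hfdef, Pi.sub_apply] using this
  -- key lower bound for the time-difference term
  have hI1 : ∫ x, f x * f x ∂μ ≤ ∫ x, (wk x - wprev x) * (-(max (-(wk x)) 0)) ∂μ := by
    refine integral_mono_ae hint1 hint2 ?_
    filter_upwards [hwprev_nonneg] with x hx
    have hfnn : 0 ≤ max (-(wk x)) 0 := le_max_right _ _
    have hkey : wk x * max (-(wk x)) 0 = -(max (-(wk x)) 0 * max (-(wk x)) 0) := by
      rcases le_total 0 (wk x) with h | h
      · rw [max_eq_right (by linarith)]; ring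
      · rw [max_eq_left (by linarith)]; ring
    simp only [hfdef]
    nlinarith
  -- combine
  have hA : ∫ x, (wk x - wprev x) * (-(max (-(wk x)) 0)) ∂μ ≤ 0 := by
    rw [hI3] at hspec
    have hτ' : 0 < 1/τ := by positivity
    nlinarith
  have hf2zero : ∫ x, f x * f x ∂μ ≤ 0 := le_trans hI1 hA
  have hf2nn : 0 ≤ ∫ x, f x * f x ∂μ := integral_nonneg fun x => mul_self_nonneg _
  have hzero : ∫ x, f x * f x ∂μ = 0 := le_antisymm hf2zero hf2nn
  have hae : (fun x => f x * f x) =ᵐ[μ] 0 := by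
    rw [← integral_eq_zero_iff_of_nonneg (fun x => mul_self_nonneg (f x)) hint1]
    exact hzero
  filter_upwards [hae] with x hx
  have hfx : f x = 0 := mul_self_eq_zero.mp hx
  have hmax : max (-(wk x)) 0 = 0 := hfx
  have h0 : -(wk x) ≤ 0 := max_eq_right_iff.mp hmax
  linarith
end
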